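/- The unique formal power series solution B(x,t) = Σ B_k(x) t^k/k! over ℚ[x] of the equation B⁽⁴⁾B - 4B'''B' + 3(B'')² + 4x(B''B - (B')²) + 2B² = 0 with B₀ = 1, B₁ = B₂ = B₃ = 0 has twelfth coefficient B₁₂(x) = -512x⁴ - 960x² - 408. -/

import Mathlib

open PowerSeries

/-- The blowup expression `B⁽⁴⁾B - 4B'''B' + 3(B'')² + 4x(B''B - (B')²) + 2B²`
for a formal power series `B` over `ℚ[x]`, with formal derivatives in `t`. -/
noncomputable def blowupExpr (B : PowerSeries (Polynomial ℚ)) : PowerSeries (Polynomial ℚ) :=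
  let d := fun f => PowerSeries.derivativeFun (R := Polynomial ℚ) f
  d (d (d (d B))) * B - 4 * d (d (d B)) * d B + 3 * (d (d B)) ^ 2 +
    4 * PowerSeries.C (R := Polynomial ℚ) Polynomial.X * (d (d B) * B - (d B) ^ 2) +
    2 * B ^ 2

noncomputable abbrev K := FractionRing (Polynomial ℚ)
noncomputable abbrev φ : Polynomial ℚ →+* K := algebraMap (Polynomial ℚ) K

lemma blowup_form (B : PowerSeries (Polynomial ℚ)) :
    blowupExpr B =
      derivativeFun (derivativeFun (derivativeFun (derivativeFun B))) * B
      - C (R := Polynomial ℚ) 4 * (derivativeFun (derivativeFun (derivativeFun B)) * derivativeFun B)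
      + C (R := Polynomial ℚ) 3 * (derivativeFun (derivativeFun B) * derivativeFun (derivativeFun B))
      + C (R := Polynomial ℚ) (4 * Polynomial.X) *
          (derivativeFun (derivativeFun B) * B - derivativeFun B * derivativeFun B)
      + C (R := Polynomial ℚ) 2 * (B * B) := by
  simp only [blowupExpr, sq, map_mul, map_ofNat]
  ring

lemma coeff_derivativeFun_aux (f : PowerSeries (Polynomial ℚ)) (n : ℕ) :
    PowerSeries.coeff n (derivativeFun f) = PowerSeries.coeff (n + 1) f * (n + 1) :=
  PowerSeries.coeff_derivative f n


set_option maxHeartbeats 2000000 in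
/-- Any formal power series solution of the blowup equation with
`B₀ = 1`, `B₁ = B₂ = B₃ = 0` has `B₁₂(x) = -512x⁴ - 960x² - 408`
(where `B_k = k! · coeff k B`). -/
theorem stmt_13 (B : PowerSeries (Polynomial ℚ)) (hB : blowupExpr B = 0)
    (h0 : PowerSeries.coeff 0 B = 1) (h1 : PowerSeries.coeff 1 B = 0)
    (h2 : PowerSeries.coeff 2 B = 0) (h3 : PowerSeries.coeff 3 B = 0) :
    (Nat.factorial 12 : Polynomial ℚ) * PowerSeries.coeff 12 B =
      -512 * Polynomial.X ^ 4 - 960 * Polynomial.X ^ 2 - 408 := by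
  rw [blowup_form] at hB
  have k0 := congrArg (PowerSeries.coeff (R := Polynomial ℚ) 0) hB
  simp [PowerSeries.coeff_mul, Finset.Nat.sum_antidiagonal_eq_sum_range_succ_mk,
    Finset.sum_range_succ, coeff_derivativeFun_aux, PowerSeries.coeff_C,
    h0, h1, h2, h3, -PowerSeries.coeff_zero_eq_constantCoeff, -mul_eq_zero, -pow_eq_zero_iff] at k0
  have k0' := congrArg φ k0
  simp only [map_add, map_sub, map_mul, map_one, map_zero, map_ofNat, map_natCast,
    map_pow, Nat.cast_ofNat, Nat.cast_one] at k0'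
  have h4' : φ (PowerSeries.coeff 4 B) = -1/12 := by
    linear_combination (1/24 : K) * k0'
  have k1 := congrArg (PowerSeries.coeff (R := Polynomial ℚ) 1) hB
  simp [PowerSeries.coeff_mul, Finset.Nat.sum_antidiagonal_eq_sum_range_succ_mk,
    Finset.sum_range_succ, coeff_derivativeFun_aux, PowerSeries.coeff_C,
    h0, h1, h2, h3, -PowerSeries.coeff_zero_eq_constantCoeff, -mul_eq_zero, -pow_eq_zero_iff] at k1
  have k1' := congrArg φ k1
  simp only [map_add, map_sub, map_mul, map_one, map_zero, map_ofNat, map_natCast,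
    map_pow, Nat.cast_ofNat, Nat.cast_one, h4'] at k1'
  have h5' : φ (PowerSeries.coeff 5 B) = 0 := by
    linear_combination (1/120 : K) * k1'
  have k2 := congrArg (PowerSeries.coeff (R := Polynomial ℚ) 2) hB
  simp [PowerSeries.coeff_mul, Finset.Nat.sum_antidiagonal_eq_sum_range_succ_mk,
    Finset.sum_range_succ, coeff_derivativeFun_aux, PowerSeries.coeff_C,
    h0, h1, h2, h3, -PowerSeries.coeff_zero_eq_constantCoeff, -mul_eq_zero, -pow_eq_zero_iff] at k2
  have k2' := congrArg φ k2
  simp only [map_add, map_sub, map_mul, map_one, map_zero, map_ofNat, map_natCast,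
    map_pow, Nat.cast_ofNat, Nat.cast_one, h4', h5'] at k2'
  have h6' : φ (PowerSeries.coeff 6 B) = (1/90) * φ Polynomial.X := by
    linear_combination (1/360 : K) * k2'
  have k3 := congrArg (PowerSeries.coeff (R := Polynomial ℚ) 3) hB
  simp [PowerSeries.coeff_mul, Finset.Nat.sum_antidiagonal_eq_sum_range_succ_mk,
    Finset.sum_range_succ, coeff_derivativeFun_aux, PowerSeries.coeff_C,
    h0, h1, h2, h3, -PowerSeries.coeff_zero_eq_constantCoeff, -mul_eq_zero, -pow_eq_zero_iff] at k3
  have k3' := congrArg φ k3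
  simp only [map_add, map_sub, map_mul, map_one, map_zero, map_ofNat, map_natCast,
    map_pow, Nat.cast_ofNat, Nat.cast_one, h4', h5', h6'] at k3'
  have h7' : φ (PowerSeries.coeff 7 B) = 0 := by
    linear_combination (1/840 : K) * k3'
  have k4 := congrArg (PowerSeries.coeff (R := Polynomial ℚ) 4) hB
  simp [PowerSeries.coeff_mul, Finset.Nat.sum_antidiagonal_eq_sum_range_succ_mk,
    Finset.sum_range_succ, coeff_derivativeFun_aux, PowerSeries.coeff_C,
    h0, h1, h2, h3, -PowerSeries.coeff_zero_eq_constantCoeff, -mul_eq_zero, -pow_eq_zero_iff] at k4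
  have k4' := congrArg φ k4
  simp only [map_add, map_sub, map_mul, map_one, map_zero, map_ofNat, map_natCast,
    map_pow, Nat.cast_ofNat, Nat.cast_one, h4', h5', h6', h7'] at k4'
  have h8' : φ (PowerSeries.coeff 8 B) = -1/10080 - (1/1260) * φ Polynomial.X ^ 2 := by
    linear_combination (1/1680 : K) * k4'
  have k5 := congrArg (PowerSeries.coeff (R := Polynomial ℚ) 5) hB
  simp [PowerSeries.coeff_mul, Finset.Nat.sum_antidiagonal_eq_sum_range_succ_mk,
    Finset.sum_range_succ, coeff_derivativeFun_aux, PowerSeries.coeff_C,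
    h0, h1, h2, h3, -PowerSeries.coeff_zero_eq_constantCoeff, -mul_eq_zero, -pow_eq_zero_iff] at k5
  have k5' := congrArg φ k5
  simp only [map_add, map_sub, map_mul, map_one, map_zero, map_ofNat, map_natCast,
    map_pow, Nat.cast_ofNat, Nat.cast_one, h4', h5', h6', h7', h8'] at k5'
  have h9' : φ (PowerSeries.coeff 9 B) = 0 := by
    linear_combination (1/3024 : K) * k5'
  have k6 := congrArg (PowerSeries.coeff (R := Polynomial ℚ) 6) hB
  simp [PowerSeries.coeff_mul, Finset.Nat.sum_antidiagonal_eq_sum_range_succ_mk,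
    Finset.sum_range_succ, coeff_derivativeFun_aux, PowerSeries.coeff_C,
    h0, h1, h2, h3, -PowerSeries.coeff_zero_eq_constantCoeff, -mul_eq_zero, -pow_eq_zero_iff] at k6
  have k6' := congrArg φ k6
  simp only [map_add, map_sub, map_mul, map_one, map_zero, map_ofNat, map_natCast,
    map_pow, Nat.cast_ofNat, Nat.cast_one, h4', h5', h6', h7', h8', h9'] at k6'
  have h10' : φ (PowerSeries.coeff 10 B) = (1/37800) * φ Polynomial.X + (1/28350) * φ Polynomial.X ^ 3 := by
    linear_combination (1/5040 : K) * k6'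
  have k7 := congrArg (PowerSeries.coeff (R := Polynomial ℚ) 7) hB
  simp [PowerSeries.coeff_mul, Finset.Nat.sum_antidiagonal_eq_sum_range_succ_mk,
    Finset.sum_range_succ, coeff_derivativeFun_aux, PowerSeries.coeff_C,
    h0, h1, h2, h3, -PowerSeries.coeff_zero_eq_constantCoeff, -mul_eq_zero, -pow_eq_zero_iff] at k7
  have k7' := congrArg φ k7
  simp only [map_add, map_sub, map_mul, map_one, map_zero, map_ofNat, map_natCast,
    map_pow, Nat.cast_ofNat, Nat.cast_one, h4', h5', h6', h7', h8', h9', h10'] at k7'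
  have h11' : φ (PowerSeries.coeff 11 B) = 0 := by
    linear_combination (1/7920 : K) * k7'
  have k8 := congrArg (PowerSeries.coeff (R := Polynomial ℚ) 8) hB
  simp [PowerSeries.coeff_mul, Finset.Nat.sum_antidiagonal_eq_sum_range_succ_mk,
    Finset.sum_range_succ, coeff_derivativeFun_aux, PowerSeries.coeff_C,
    h0, h1, h2, h3, -PowerSeries.coeff_zero_eq_constantCoeff, -mul_eq_zero, -pow_eq_zero_iff] at k8
  have k8' := congrArg φ k8
  simp only [map_add, map_sub, map_mul, map_one, map_zero, map_ofNat, map_natCast,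
    map_pow, Nat.cast_ofNat, Nat.cast_one, h4', h5', h6', h7', h8', h9', h10', h11'] at k8'
  have h12' : φ (PowerSeries.coeff 12 B) = -17/19958400 - (1/498960) * φ Polynomial.X ^ 2 - (1/935550) * φ Polynomial.X ^ 4 := by
    linear_combination (1/11880 : K) * k8'
  apply IsFractionRing.injective (Polynomial ℚ) K
  simp only [map_add, map_sub, map_mul, map_neg, map_pow, map_ofNat, map_natCast]
  norm_num [Nat.factorial]
  linear_combination (479001600 : K) * h12'
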